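/- Let q ≥ 5 be a prime power. For every point P of the twisted cubic C, the stabilizer {φ ∈ G_q : φ·P = P} of P in G_q has exactly q(q−1) elements. -/

import Mathlib

open Matrix

noncomputable section

/-- A point of `PG(3,q)`: a 1-dimensional subspace of `F^4`. -/
def IsPoint (F : Type) [Field F] (W : Submodule F (Fin 4 → F)) : Prop :=
  Module.finrank F W = 1

/-- A line of `PG(3,q)`: a 2-dimensional subspace of `F^4`. -/
def IsLine (F : Type) [Field F] (W : Submodule F (Fin 4 → F)) : Prop :=
  Module.finrank F W = 2

/-- The twisted cubic `C = {P(t) : t ∈ F} ∪ {P(∞)}` as a set of points of `PG(3,q)`. -/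
def twistedCubic (F : Type) [Field F] : Set (Submodule F (Fin 4 → F)) :=
  {W | (∃ t : F, W = Submodule.span F {![t ^ 3, t ^ 2, t, 1]}) ∨
       W = Submodule.span F {![1, 0, 0, 0]}}

/-- The action of an invertible matrix on subspaces of `F^4` (row-vector convention
`x ↦ x·M`). -/
def act (F : Type) [Field F] (M : GL (Fin 4) F) :
    Submodule F (Fin 4 → F) → Submodule F (Fin 4 → F) :=
  fun W => W.map (Matrix.vecMulLinear (M : Matrix (Fin 4) (Fin 4) F))

/-- The group `G_q` of projectivities stabilizing the twisted cubic: the maps on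
subspaces induced by invertible matrices mapping the cubic onto itself.  (Two
matrices induce the same projectivity iff they induce the same map on subspaces,
so elements of `G_q` are faithfully represented by such maps.) -/
def Gq (F : Type) [Field F] :
    Set (Submodule F (Fin 4 → F) → Submodule F (Fin 4 → F)) :=
  {f | (∃ M : GL (Fin 4) F, f = act F M) ∧ f '' twistedCubic F = twistedCubic F}

namespace TC

variable {F : Type} [Field F]

def vP (s : F) : Fin 4 → F := ![s ^ 3, s ^ 2, s, 1]

def e0 : Fin 4 → F := ![1, 0, 0, 0]

lemma vP_ne_zero (s : F) : vP s ≠ 0 := by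
  intro h
  have := congrFun h 3
  simp [vP] at this

lemma e0_ne_zero : (e0 : Fin 4 → F) ≠ 0 := by
  intro h
  have := congrFun h 0
  simp [e0] at this

def Pp (s : F) : Submodule F (Fin 4 → F) := Submodule.span F {vP s}

def Pinf : Submodule F (Fin 4 → F) := Submodule.span F {(e0 : Fin 4 → F)}

lemma vP_inj : Function.Injective (vP (F := F)) := by
  intro s t h
  have := congrFun h 2
  simpa [vP] using this

lemma Pp_inj : Function.Injective (Pp (F := F)) := by
  intro s t h
  have hm : vP s ∈ Pp t := h ▸ Submodule.mem_span_singleton_self _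
  obtain ⟨c, hc⟩ := Submodule.mem_span_singleton.mp hm
  have h3 := congrFun hc 3
  simp [vP] at h3
  have h2 := congrFun hc 2
  simp [vP, h3] at h2
  exact h2.symm

lemma Pp_ne_Pinf (s : F) : Pp s ≠ Pinf := by
  intro h
  have hm : vP s ∈ Pinf := h ▸ Submodule.mem_span_singleton_self _
  obtain ⟨c, hc⟩ := Submodule.mem_span_singleton.mp hm
  have h3 := congrFun hc 3
  simp [vP, e0] at h3

lemma span_smul_eq {c : F} (hc : c ≠ 0) (x : Fin 4 → F) :
    Submodule.span F {c • x} = Submodule.span F {x} :=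
  Submodule.span_singleton_smul_eq (IsUnit.mk0 c hc) x

lemma act_span (M : GL (Fin 4) F) (x : Fin 4 → F) :
    act F M (Submodule.span F {x}) = Submodule.span F {x ᵥ* (M : Matrix (Fin 4) (Fin 4) F)} := by
  simp [act, Submodule.map_span, Set.image_singleton]

lemma act_act (A B : GL (Fin 4) F) (W : Submodule F (Fin 4 → F)) :
    act F A (act F B W) = act F (B * A) W := by
  have h : (Matrix.vecMulLinear ((A : Matrix (Fin 4) (Fin 4) F))).comp
      (Matrix.vecMulLinear ((B : Matrix (Fin 4) (Fin 4) F)))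
      = Matrix.vecMulLinear ((↑(B * A) : Matrix (Fin 4) (Fin 4) F)) := by
    refine LinearMap.ext fun x => ?_
    simp [Matrix.vecMul_vecMul]
  unfold act
  rw [← Submodule.map_comp, h]

lemma act_one (W : Submodule F (Fin 4 → F)) : act F 1 W = W := by
  simp [act]
  have : Matrix.vecMulLinear (1 : Matrix (Fin 4) (Fin 4) F) = LinearMap.id := by
    ext x j
    simp
  rw [this, Submodule.map_id]

lemma act_leftInv (M : GL (Fin 4) F) (W : Submodule F (Fin 4 → F)) :
    act F M⁻¹ (act F M W) = W := by
  rw [act_act, mul_inv_cancel, act_one]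

lemma act_injective (M : GL (Fin 4) F) : Function.Injective (act F M) := by
  intro W W' h
  have := congrArg (act F M⁻¹) h
  rwa [act_leftInv, act_leftInv] at this

lemma twistedCubic_eq :
    twistedCubic F = {W | (∃ t : F, W = Pp t) ∨ W = Pinf} := by
  rfl


def Mab (a b : F) : Matrix (Fin 4) (Fin 4) F :=
  !![a ^ 3, 0, 0, 0;
     3 * a ^ 2 * b, a ^ 2, 0, 0;
     3 * a * b ^ 2, 2 * a * b, a, 0;
     b ^ 3, b ^ 2, b, 1]

set_option maxHeartbeats 1000000 in
lemma Mab_mul (a b c d : F) : Mab a b * Mab c d = Mab (c * a) (c * b + d) := by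
  ext i j
  fin_cases i <;> fin_cases j <;>
    simp [Mab, Matrix.mul_apply, Fin.sum_univ_four] <;> ring

lemma Mab_one : (Mab 1 0 : Matrix (Fin 4) (Fin 4) F) = 1 := by
  ext i j
  fin_cases i <;> fin_cases j <;> simp [Mab, Matrix.one_apply, Matrix.vecHead, Matrix.vecTail]

lemma Mab_mul_inv {a b : F} (ha : a ≠ 0) :
    Mab a b * Mab a⁻¹ (-(b / a)) = 1 ∧ Mab a⁻¹ (-(b / a)) * Mab a b = 1 := by
  constructor
  · rw [Mab_mul]
    rw [show a⁻¹ * a = 1 by field_simp, show a⁻¹ * b + -(b/a) = 0 by field_simp; ring, Mab_one]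
  · rw [Mab_mul]
    rw [show a * a⁻¹ = 1 by field_simp, show a * -(b/a) + b = 0 by field_simp; ring, Mab_one]

def MabU (a b : F) (ha : a ≠ 0) : GL (Fin 4) F :=
  ⟨Mab a b, Mab a⁻¹ (-(b / a)), (Mab_mul_inv ha).1, (Mab_mul_inv ha).2⟩

lemma MabU_val (a b : F) (ha : a ≠ 0) :
    ((MabU a b ha : GL (Fin 4) F) : Matrix (Fin 4) (Fin 4) F) = Mab a b := rfl

lemma vecMul_vP_Mab (t a b : F) : vP t ᵥ* Mab a b = vP (a * t + b) := by
  funext j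
  fin_cases j <;>
    simp [vP, Mab, Matrix.vecMul, dotProduct, Fin.sum_univ_four] <;>
    ring

lemma vecMul_e0_Mab (a b : F) : (e0 : Fin 4 → F) ᵥ* Mab a b = a ^ 3 • e0 := by
  funext j
  fin_cases j <;> simp [e0, Mab, Matrix.vecMul, dotProduct, Fin.sum_univ_four]

lemma act_MabU_Pp (t a b : F) (ha : a ≠ 0) : act F (MabU a b ha) (Pp t) = Pp (a * t + b) := by
  rw [Pp, act_span, MabU_val, vecMul_vP_Mab]
  rfl

lemma act_MabU_Pinf (a b : F) (ha : a ≠ 0) : act F (MabU a b ha) Pinf = Pinf := by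
  rw [Pinf, act_span, MabU_val, vecMul_e0_Mab, span_smul_eq (pow_ne_zero 3 ha)]

lemma mem_TC {W : Submodule F (Fin 4 → F)} :
    W ∈ twistedCubic F ↔ (∃ t : F, W = Pp t) ∨ W = Pinf := Iff.rfl

lemma Pp_mem_TC (t : F) : Pp t ∈ twistedCubic F := Or.inl ⟨t, rfl⟩

lemma Pinf_mem_TC : (Pinf : Submodule F (Fin 4 → F)) ∈ twistedCubic F := Or.inr rfl

lemma image_act_MabU (a b : F) (ha : a ≠ 0) :
    act F (MabU a b ha) '' twistedCubic F = twistedCubic F := by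
  ext W
  constructor
  · rintro ⟨V, hV, rfl⟩
    rcases mem_TC.mp hV with ⟨t, rfl⟩ | rfl
    · rw [act_MabU_Pp t a b ha]; exact Pp_mem_TC _
    · rw [act_MabU_Pinf a b ha]; exact Pinf_mem_TC
  · intro hW
    rcases mem_TC.mp hW with ⟨s, rfl⟩ | rfl
    · refine ⟨Pp ((s - b) / a), Pp_mem_TC _, ?_⟩
      rw [act_MabU_Pp _ a b ha]
      congr 1
      field_simp
      ring
    · exact ⟨Pinf, Pinf_mem_TC, act_MabU_Pinf a b ha⟩

lemma MabU_mem_Gq (a b : F) (ha : a ≠ 0) : act F (MabU a b ha) ∈ Gq F :=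
  ⟨⟨MabU a b ha, rfl⟩, image_act_MabU a b ha⟩

def Nt (τ : F) : Matrix (Fin 4) (Fin 4) F :=
  !![τ ^ 3, τ ^ 2, τ, 1;
     3 * τ ^ 2, 2 * τ, 1, 0;
     3 * τ, 1, 0, 0;
     1, 0, 0, 0]

def Nt' (τ : F) : Matrix (Fin 4) (Fin 4) F :=
  !![0, 0, 0, 1;
     0, 0, 1, -(3 * τ);
     0, 1, -(2 * τ), 3 * τ ^ 2;
     1, -τ, τ ^ 2, -τ ^ 3]

set_option maxHeartbeats 1000000 in
lemma Nt_mul_inv (τ : F) : Nt τ * Nt' τ = 1 ∧ Nt' τ * Nt τ = 1 := by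
  constructor <;>
    ext i j <;>
    fin_cases i <;> fin_cases j <;>
    simp [Nt, Nt', Matrix.mul_apply, Fin.sum_univ_four, Matrix.one_apply,
      Matrix.vecHead, Matrix.vecTail] <;>
    ring

def NtU (τ : F) : GL (Fin 4) F := ⟨Nt τ, Nt' τ, (Nt_mul_inv τ).1, (Nt_mul_inv τ).2⟩

lemma NtU_val (τ : F) : ((NtU τ : GL (Fin 4) F) : Matrix (Fin 4) (Fin 4) F) = Nt τ := rfl

lemma vecMul_vP_Nt (t τ : F) :
    vP t ᵥ* Nt τ = ![(τ * t + 1) ^ 3, (τ * t + 1) ^ 2 * t, (τ * t + 1) * t ^ 2, t ^ 3] := by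
  funext j
  fin_cases j <;>
    simp [vP, Nt, Matrix.vecMul, dotProduct, Fin.sum_univ_four,
      Matrix.vecHead, Matrix.vecTail] <;>
    ring

lemma vecMul_e0_Nt (τ : F) : (e0 : Fin 4 → F) ᵥ* Nt τ = vP τ := by
  funext j
  fin_cases j <;>
    simp [vP, e0, Nt, Matrix.vecMul, dotProduct, Fin.sum_univ_four]

lemma act_NtU_Pinf (τ : F) : act F (NtU τ) Pinf = Pp τ := by
  rw [Pinf, act_span, NtU_val, vecMul_e0_Nt]
  rfl

lemma act_NtU_Pp_zero (τ : F) : act F (NtU τ) (Pp 0) = Pinf := by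
  rw [Pp, act_span, NtU_val, vecMul_vP_Nt]
  have : ![(τ * 0 + 1) ^ 3, (τ * 0 + 1) ^ 2 * 0, (τ * 0 + 1) * 0 ^ 2, (0:F) ^ 3]
      = (e0 : Fin 4 → F) := by
    funext j
    fin_cases j <;> simp [e0]
  rw [this]
  rfl

lemma act_NtU_Pp (τ t : F) (ht : t ≠ 0) : act F (NtU τ) (Pp t) = Pp (τ + t⁻¹) := by
  rw [Pp, act_span, NtU_val, vecMul_vP_Nt]
  have : ![(τ * t + 1) ^ 3, (τ * t + 1) ^ 2 * t, (τ * t + 1) * t ^ 2, t ^ 3]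
      = t ^ 3 • vP (τ + t⁻¹) := by
    funext j
    fin_cases j <;>
      simp [vP] <;>
      field_simp <;>
      ring
  rw [this, span_smul_eq (pow_ne_zero 3 ht)]
  rfl

lemma image_act_NtU (τ : F) :
    act F (NtU τ) '' twistedCubic F = twistedCubic F := by
  ext W
  constructor
  · rintro ⟨V, hV, rfl⟩
    rcases mem_TC.mp hV with ⟨t, rfl⟩ | rfl
    · rcases eq_or_ne t 0 with rfl | ht
      · rw [act_NtU_Pp_zero]; exact Pinf_mem_TC
      · rw [act_NtU_Pp τ t ht]; exact Pp_mem_TC _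
    · rw [act_NtU_Pinf]; exact Pp_mem_TC _
  · intro hW
    rcases mem_TC.mp hW with ⟨s, rfl⟩ | rfl
    · rcases eq_or_ne s τ with rfl | hs
      · exact ⟨Pinf, Pinf_mem_TC, act_NtU_Pinf s⟩
      · refine ⟨Pp (s - τ)⁻¹, Pp_mem_TC _, ?_⟩
        rw [act_NtU_Pp τ _ (inv_ne_zero (sub_ne_zero.mpr hs)), inv_inv]
        congr 1
        ring
    · exact ⟨Pp 0, Pp_mem_TC _, act_NtU_Pp_zero τ⟩

lemma NtU_mem_Gq (τ : F) : act F (NtU τ) ∈ Gq F :=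
  ⟨⟨NtU τ, rfl⟩, image_act_NtU τ⟩

lemma comp_mem_Gq {f g : Submodule F (Fin 4 → F) → Submodule F (Fin 4 → F)}
    (hf : f ∈ Gq F) (hg : g ∈ Gq F) : f ∘ g ∈ Gq F := by
  obtain ⟨⟨A, rfl⟩, hfim⟩ := hf
  obtain ⟨⟨B, rfl⟩, hgim⟩ := hg
  refine ⟨⟨B * A, ?_⟩, ?_⟩
  · funext W
    exact act_act A B W
  · rw [Set.image_comp, hgim, hfim]

open Polynomial in
lemma quad_coeffs (A B C' : F) :
    (Polynomial.C A * X ^ 2 + Polynomial.C B * X + Polynomial.C C').coeff 2 = A ∧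
    (Polynomial.C A * X ^ 2 + Polynomial.C B * X + Polynomial.C C').coeff 1 = B ∧
    (Polynomial.C A * X ^ 2 + Polynomial.C B * X + Polynomial.C C').coeff 0 = C' := by
  refine ⟨?_, ?_, ?_⟩ <;>
    simp [Polynomial.coeff_add, Polynomial.coeff_C_mul, Polynomial.coeff_X_pow,
      Polynomial.coeff_C]

lemma vecMul_smul_mat (c : F) (M : Matrix (Fin 4) (Fin 4) F) (x : Fin 4 → F) :
    x ᵥ* (c • M) = c • (x ᵥ* M) := by
  funext i
  simp [Matrix.vecMul, dotProduct, Fin.sum_univ_four]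
  ring

lemma act_eq_of_smul {A B : GL (Fin 4) F} {c : F} (hc : c ≠ 0)
    (h : ((A : GL (Fin 4) F) : Matrix (Fin 4) (Fin 4) F) = c • ((B : GL (Fin 4) F) : Matrix (Fin 4) (Fin 4) F)) :
    act F A = act F B := by
  funext W
  unfold act
  rw [h]
  ext x
  simp only [Submodule.mem_map, Matrix.vecMulLinear_apply]
  constructor
  · rintro ⟨y, hy, rfl⟩
    refine ⟨c • y, W.smul_mem c hy, ?_⟩
    rw [Matrix.smul_vecMul, vecMul_smul_mat]
  · rintro ⟨y, hy, rfl⟩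
    refine ⟨c⁻¹ • y, W.smul_mem c⁻¹ hy, ?_⟩
    rw [Matrix.smul_vecMul, vecMul_smul_mat, smul_smul, inv_mul_cancel₀ hc, one_smul]

open Polynomial in
lemma cubic_coeffs (A B C' D' : F) :
    (Polynomial.C A * X ^ 3 + Polynomial.C B * X ^ 2 + Polynomial.C C' * X
      + Polynomial.C D').coeff 3 = A ∧
    (Polynomial.C A * X ^ 3 + Polynomial.C B * X ^ 2 + Polynomial.C C' * X
      + Polynomial.C D').coeff 2 = B ∧
    (Polynomial.C A * X ^ 3 + Polynomial.C B * X ^ 2 + Polynomial.C C' * X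
      + Polynomial.C D').coeff 1 = C' ∧
    (Polynomial.C A * X ^ 3 + Polynomial.C B * X ^ 2 + Polynomial.C C' * X
      + Polynomial.C D').coeff 0 = D' := by
  refine ⟨?_, ?_, ?_, ?_⟩ <;>
    simp [Polynomial.coeff_add, Polynomial.coeff_C_mul, Polynomial.coeff_X_pow,
      Polynomial.coeff_C]

open Polynomial in
set_option maxHeartbeats 2000000 in
lemma stab_inf_classify [Fintype F] (hq5 : 5 ≤ Fintype.card F)
    (f : Submodule F (Fin 4 → F) → Submodule F (Fin 4 → F))
    (hf : f ∈ Gq F) (hfix : f Pinf = Pinf) :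
    ∃ (a b : F) (ha : a ≠ 0), f = act F (MabU a b ha) := by
  obtain ⟨⟨M, rfl⟩, him⟩ := hf
  -- vecMul by M is injective-ish
  have hvm : ∀ x : Fin 4 → F, x ᵥ* (M : Matrix (Fin 4) (Fin 4) F) = 0 → x = 0 := by
    intro x hx
    have h1 : x ᵥ* (M : Matrix (Fin 4) (Fin 4) F) ᵥ* ((M⁻¹ : GL (Fin 4) F) : Matrix (Fin 4) (Fin 4) F) = x := by
      rw [Matrix.vecMul_vecMul, ← Units.val_mul, mul_inv_cancel, Units.val_one,
        Matrix.vecMul_one]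
    rw [hx, Matrix.zero_vecMul] at h1
    exact h1.symm
  -- row 0 of M
  have hrow0 : ∃ lam : F, lam ≠ 0 ∧ (e0 : Fin 4 → F) ᵥ* (M : Matrix (Fin 4) (Fin 4) F) = lam • e0 := by
    have h1 : act F M Pinf = Pinf := hfix
    rw [Pinf, act_span] at h1
    have h2 : (e0 : Fin 4 → F) ᵥ* (M : Matrix (Fin 4) (Fin 4) F) ∈
        Submodule.span F {(e0 : Fin 4 → F)} := h1 ▸ Submodule.mem_span_singleton_self _
    obtain ⟨c, hc⟩ := Submodule.mem_span_singleton.mp h2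
    refine ⟨c, ?_, hc.symm⟩
    rintro rfl
    rw [zero_smul] at hc
    exact e0_ne_zero (hvm _ hc.symm)
  obtain ⟨lam, hlam, hrow0⟩ := hrow0
  -- σ and μ
  have key : ∀ t : F, ∃ s c : F, c ≠ 0 ∧ vP t ᵥ* (M : Matrix (Fin 4) (Fin 4) F) = c • vP s := by
    intro t
    have h1 : act F M (Pp t) ∈ twistedCubic F :=
      him ▸ Set.mem_image_of_mem _ (Pp_mem_TC t)
    rcases mem_TC.mp h1 with ⟨s, hs⟩ | hstar
    · rw [Pp, act_span] at hs
      have h2 : vP t ᵥ* (M : Matrix (Fin 4) (Fin 4) F) ∈ Pp s :=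
        hs ▸ Submodule.mem_span_singleton_self _
      obtain ⟨c, hc⟩ := Submodule.mem_span_singleton.mp h2
      refine ⟨s, c, ?_, hc.symm⟩
      rintro rfl
      rw [zero_smul] at hc
      exact vP_ne_zero t (hvm _ hc.symm)
    · exfalso
      apply Pp_ne_Pinf t
      apply act_injective M
      rw [hstar, hfix]
  choose σ μ hμ hvec using key
  have hfPp : ∀ t, act F M (Pp t) = Pp (σ t) := by
    intro t
    rw [Pp, act_span, hvec t, span_smul_eq (hμ t)]
    rfl
  have hσinj : Function.Injective σ := by
    intro t t' h
    apply Pp_inj (act_injective M ?_)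
    rw [hfPp, hfPp, h]
  -- coordinates
  have hcoord : ∀ (t : F) (j : Fin 4), (vP t ᵥ* (M : Matrix (Fin 4) (Fin 4) F)) j
      = t ^ 3 * (M : Matrix (Fin 4) (Fin 4) F) 0 j + t ^ 2 * (M : Matrix (Fin 4) (Fin 4) F) 1 j
        + t * (M : Matrix (Fin 4) (Fin 4) F) 2 j + (M : Matrix (Fin 4) (Fin 4) F) 3 j := by
    intro t j
    simp [vP, Matrix.vecMul, dotProduct, Fin.sum_univ_four]
  set Mm : Matrix (Fin 4) (Fin 4) F := (M : Matrix (Fin 4) (Fin 4) F) with hMm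
  have hM0 : Mm 0 0 = lam ∧ Mm 0 1 = 0 ∧ Mm 0 2 = 0 ∧ Mm 0 3 = 0 := by
    have h0 := congrFun hrow0 0
    have h1 := congrFun hrow0 1
    have h2 := congrFun hrow0 2
    have h3 := congrFun hrow0 3
    have he : ∀ j : Fin 4, ((e0 : Fin 4 → F) ᵥ* Mm) j = Mm 0 j := by
      intro j
      simp [e0, Matrix.vecMul, dotProduct, Fin.sum_univ_four]
    rw [he] at h0 h1 h2 h3
    simp [e0] at h0 h1 h2 h3
    exact ⟨h0, h1, h2, h3⟩
  -- the four coordinate polynomials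
  set p0 : F[X] := Polynomial.C lam * X ^ 3 + Polynomial.C (Mm 1 0) * X ^ 2
      + Polynomial.C (Mm 2 0) * X + Polynomial.C (Mm 3 0) with hp0def
  set p1 : F[X] := Polynomial.C (Mm 1 1) * X ^ 2 + Polynomial.C (Mm 2 1) * X
      + Polynomial.C (Mm 3 1) with hp1def
  set p2 : F[X] := Polynomial.C (Mm 1 2) * X ^ 2 + Polynomial.C (Mm 2 2) * X
      + Polynomial.C (Mm 3 2) with hp2def
  set p3 : F[X] := Polynomial.C (Mm 1 3) * X ^ 2 + Polynomial.C (Mm 2 3) * X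
      + Polynomial.C (Mm 3 3) with hp3def
  have hev0 : ∀ t : F, p0.eval t = μ t * σ t ^ 3 := by
    intro t
    have h := congrFun (hvec t) 0
    rw [hcoord t 0] at h
    simp [vP, hM0.1] at h
    simp [hp0def]
    linear_combination h
  have hev1 : ∀ t : F, p1.eval t = μ t * σ t ^ 2 := by
    intro t
    have h := congrFun (hvec t) 1
    rw [hcoord t 1] at h
    simp [vP, hM0.2.1] at h
    simp [hp1def]
    linear_combination h
  have hev2 : ∀ t : F, p2.eval t = μ t * σ t := by
    intro t
    have h := congrFun (hvec t) 2
    rw [hcoord t 2] at h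
    simp [vP, hM0.2.2.1] at h
    simp [hp2def]
    linear_combination h
  have hev3 : ∀ t : F, p3.eval t = μ t := by
    intro t
    have h := congrFun (hvec t) 3
    rw [hcoord t 3] at h
    simp [vP, hM0.2.2.2] at h
    simp [hp3def]
    linear_combination h
  -- zero polynomial criterion
  have polyext : ∀ h : F[X], h.natDegree ≤ 4 → (∀ t : F, h.eval t = 0) → h = 0 := by
    intro h hd hev
    exact Polynomial.eq_zero_of_natDegree_lt_card_of_eval_eq_zero h Function.injective_id
      (fun t => hev t) (lt_of_le_of_lt hd (by omega))
  have hd1 : p1.natDegree ≤ 2 := Polynomial.natDegree_quadratic_le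
  have hd2 : p2.natDegree ≤ 2 := Polynomial.natDegree_quadratic_le
  have hd3 : p3.natDegree ≤ 2 := Polynomial.natDegree_quadratic_le
  have hd0 : p0.natDegree ≤ 3 := Polynomial.natDegree_cubic_le
  have hp3ev : ∀ t : F, p3.eval t ≠ 0 := fun t => (hev3 t) ▸ hμ t
  have hp3ne : p3 ≠ 0 := fun h => hp3ev 0 (by rw [h]; simp)
  have hμσ : ∀ t t', σ t = σ t' → t = t' := fun t t' h => hσinj h
  have hσ01 : σ 0 ≠ σ 1 := fun h => one_ne_zero (hσinj h).symm
  have hp2ne : p2 ≠ 0 := by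
    intro h
    apply hσ01
    have e0' := hev2 0
    have e1 := hev2 1
    rw [h] at e0' e1
    simp at e0' e1
    have s0 : σ 0 = 0 := e0'.resolve_left (hμ 0)
    have s1 : σ 1 = 0 := e1.resolve_left (hμ 1)
    rw [s0, s1]
  have hId : p2 * p2 = p1 * p3 := by
    have h := polyext (p2 * p2 - p1 * p3)
      ((Polynomial.natDegree_sub_le _ _).trans (max_le
        ((Polynomial.natDegree_mul_le).trans (by omega))
        ((Polynomial.natDegree_mul_le).trans (by omega))))
      (fun t => by simp [hev1, hev2, hev3]; ring)
    exact sub_eq_zero.mp h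
  -- p3 is constant
  have hconst : Mm 1 3 = 0 ∧ Mm 2 3 = 0 := by
    rcases eq_or_ne (Mm 1 3) 0 with hA | hA
    · refine ⟨hA, ?_⟩
      by_contra hB
      apply hp3ev (-(Mm 3 3) / (Mm 2 3))
      rw [hp3def]
      simp [hA]
      field_simp
      ring
    · exfalso
      have hdeg : p3.natDegree = 2 := by
        rw [hp3def]
        exact Polynomial.natDegree_quadratic hA
      have hirr : Irreducible p3 := by
        rw [Polynomial.irreducible_iff_roots_eq_zero_of_degree_le_three (by omega) (by omega)]
        rw [Multiset.eq_zero_iff_forall_notMem]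
        intro r hr
        rw [Polynomial.mem_roots hp3ne] at hr
        exact hp3ev r hr
      have hdvd : p3 ∣ p2 := by
        have hdd : p3 ∣ p2 * p2 := ⟨p1, by rw [hId]; ring⟩
        rcases hirr.prime.2.2 p2 p2 hdd with h | h <;> exact h
      obtain ⟨r, hr⟩ := hdvd
      have hrc : ∃ k, r = Polynomial.C k := by
        rcases eq_or_ne r 0 with rfl | hrne
        · exact ⟨0, by simp⟩
        · have hh : p2.natDegree = 2 + r.natDegree := by
            rw [hr, Polynomial.natDegree_mul hp3ne hrne, hdeg]
          have hz : r.natDegree = 0 := by omega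
          exact ⟨r.coeff 0, Polynomial.eq_C_of_natDegree_eq_zero hz⟩
      obtain ⟨k, rfl⟩ := hrc
      apply hσ01
      have hσc : ∀ t, σ t = k := by
        intro t
        have h2 := hev2 t
        rw [hr] at h2
        simp [hev3 t] at h2
        exact (h2.resolve_right (hμ t)).symm
      rw [hσc 0, hσc 1]
  have hDne : Mm 3 3 ≠ 0 := by
    have h := hp3ev 0
    rw [hp3def] at h
    simpa using h
  have hp3C : p3 = Polynomial.C (Mm 3 3) := by
    rw [hp3def, hconst.1, hconst.2]
    simp
  have hμt : ∀ t, μ t = Mm 3 3 := by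
    intro t
    have h := hev3 t
    rw [hp3C] at h
    simpa using h.symm
  -- p2 is linear
  have h12 : Mm 1 2 = 0 := by
    by_contra h
    have hdeg2 : p2.natDegree = 2 := by
      rw [hp2def]
      exact Polynomial.natDegree_quadratic h
    have h4 : (p2 * p2).natDegree = 4 := by
      rw [Polynomial.natDegree_mul hp2ne hp2ne, hdeg2]
    have h5 : (p1 * p3).natDegree ≤ 2 := by
      rw [hp3C]
      exact (Polynomial.natDegree_mul_le).trans (by simp [Polynomial.natDegree_C]; omega)
    rw [hId] at h4
    omega
  have hp2C : p2 = Polynomial.C (Mm 2 2) * X + Polynomial.C (Mm 3 2) := by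
    rw [hp2def, h12]
    simp
  have hane : Mm 2 2 ≠ 0 := by
    intro h
    apply hσ01
    have hσc : ∀ t, σ t = Mm 3 2 / Mm 3 3 := by
      intro t
      have h2 := hev2 t
      rw [hp2C, h] at h2
      simp [hμt t] at h2
      rw [h2, mul_comm, mul_div_assoc, div_self hDne, mul_one]
    rw [hσc 0, hσc 1]
  -- coefficients of p1
  have hId1 : p1 * Polynomial.C (Mm 3 3)
      = Polynomial.C (Mm 2 2 * Mm 2 2) * X ^ 2
        + Polynomial.C (Mm 2 2 * Mm 3 2 + Mm 2 2 * Mm 3 2) * X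
        + Polynomial.C (Mm 3 2 * Mm 3 2) := by
    rw [← hp3C, ← hId, hp2C]
    rw [Polynomial.C_mul, Polynomial.C_add, Polynomial.C_mul, Polynomial.C_mul]
    ring
  have hco1 : p1.coeff 2 = Mm 1 1 ∧ p1.coeff 1 = Mm 2 1 ∧ p1.coeff 0 = Mm 3 1 := by
    rw [hp1def]
    exact quad_coeffs _ _ _
  have h11 : Mm 1 1 * Mm 3 3 = Mm 2 2 * Mm 2 2 := by
    have hc := congrArg (fun p : Polynomial F => p.coeff 2) hId1
    simp only [Polynomial.coeff_mul_C] at hc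
    rw [hco1.1, (quad_coeffs (Mm 2 2 * Mm 2 2) (Mm 2 2 * Mm 3 2 + Mm 2 2 * Mm 3 2)
      (Mm 3 2 * Mm 3 2)).1] at hc
    exact hc
  have h21 : Mm 2 1 * Mm 3 3 = Mm 2 2 * Mm 3 2 + Mm 2 2 * Mm 3 2 := by
    have hc := congrArg (fun p : Polynomial F => p.coeff 1) hId1
    simp only [Polynomial.coeff_mul_C] at hc
    rw [hco1.2.1, (quad_coeffs (Mm 2 2 * Mm 2 2) (Mm 2 2 * Mm 3 2 + Mm 2 2 * Mm 3 2)
      (Mm 3 2 * Mm 3 2)).2.1] at hc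
    exact hc
  have h31 : Mm 3 1 * Mm 3 3 = Mm 3 2 * Mm 3 2 := by
    have hc := congrArg (fun p : Polynomial F => p.coeff 0) hId1
    simp only [Polynomial.coeff_mul_C] at hc
    rw [hco1.2.2, (quad_coeffs (Mm 2 2 * Mm 2 2) (Mm 2 2 * Mm 3 2 + Mm 2 2 * Mm 3 2)
      (Mm 3 2 * Mm 3 2)).2.2] at hc
    exact hc
  -- identity for p0
  have hId0 : p0 * Polynomial.C (Mm 3 3 ^ 2)
      = Polynomial.C (Mm 2 2 ^ 3) * X ^ 3 + Polynomial.C (3 * Mm 2 2 ^ 2 * Mm 3 2) * X ^ 2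
        + Polynomial.C (3 * Mm 2 2 * Mm 3 2 ^ 2) * X + Polynomial.C (Mm 3 2 ^ 3) := by
    have h := polyext (p0 * Polynomial.C (Mm 3 3 ^ 2)
        - (Polynomial.C (Mm 2 2 ^ 3) * X ^ 3 + Polynomial.C (3 * Mm 2 2 ^ 2 * Mm 3 2) * X ^ 2
          + Polynomial.C (3 * Mm 2 2 * Mm 3 2 ^ 2) * X + Polynomial.C (Mm 3 2 ^ 3)))
      ((Polynomial.natDegree_sub_le _ _).trans (max_le
        ((Polynomial.natDegree_mul_le).trans (by simp [Polynomial.natDegree_C]; omega))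
        (Polynomial.natDegree_cubic_le.trans (by omega))))
      (fun t => by
        have e2 : Mm 2 2 * t + Mm 3 2 = μ t * σ t := by
          have h := hev2 t
          rw [hp2C] at h
          simpa using h
        simp only [Polynomial.eval_sub, Polynomial.eval_mul, Polynomial.eval_add,
          Polynomial.eval_C, Polynomial.eval_pow, Polynomial.eval_X, hev0 t]
        rw [← hμt t]
        linear_combination (-(μ t * σ t) ^ 2 - (μ t * σ t) * (Mm 2 2 * t + Mm 3 2)
          - (Mm 2 2 * t + Mm 3 2) ^ 2) * e2)
    exact sub_eq_zero.mp h
  have hco0 : p0.coeff 3 = lam ∧ p0.coeff 2 = Mm 1 0 ∧ p0.coeff 1 = Mm 2 0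
      ∧ p0.coeff 0 = Mm 3 0 := by
    rw [hp0def]
    exact cubic_coeffs _ _ _ _
  have h00 : lam * Mm 3 3 ^ 2 = Mm 2 2 ^ 3 := by
    have hc := congrArg (fun p : Polynomial F => p.coeff 3) hId0
    simp only [Polynomial.coeff_mul_C] at hc
    rw [hco0.1, (cubic_coeffs (Mm 2 2 ^ 3) (3 * Mm 2 2 ^ 2 * Mm 3 2)
      (3 * Mm 2 2 * Mm 3 2 ^ 2) (Mm 3 2 ^ 3)).1] at hc
    exact hc
  have h10 : Mm 1 0 * Mm 3 3 ^ 2 = 3 * Mm 2 2 ^ 2 * Mm 3 2 := by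
    have hc := congrArg (fun p : Polynomial F => p.coeff 2) hId0
    simp only [Polynomial.coeff_mul_C] at hc
    rw [hco0.2.1, (cubic_coeffs (Mm 2 2 ^ 3) (3 * Mm 2 2 ^ 2 * Mm 3 2)
      (3 * Mm 2 2 * Mm 3 2 ^ 2) (Mm 3 2 ^ 3)).2.1] at hc
    exact hc
  have h20 : Mm 2 0 * Mm 3 3 ^ 2 = 3 * Mm 2 2 * Mm 3 2 ^ 2 := by
    have hc := congrArg (fun p : Polynomial F => p.coeff 1) hId0
    simp only [Polynomial.coeff_mul_C] at hc
    rw [hco0.2.2.1, (cubic_coeffs (Mm 2 2 ^ 3) (3 * Mm 2 2 ^ 2 * Mm 3 2)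
      (3 * Mm 2 2 * Mm 3 2 ^ 2) (Mm 3 2 ^ 3)).2.2.1] at hc
    exact hc
  have h30 : Mm 3 0 * Mm 3 3 ^ 2 = Mm 3 2 ^ 3 := by
    have hc := congrArg (fun p : Polynomial F => p.coeff 0) hId0
    simp only [Polynomial.coeff_mul_C] at hc
    rw [hco0.2.2.2, (cubic_coeffs (Mm 2 2 ^ 3) (3 * Mm 2 2 ^ 2 * Mm 3 2)
      (3 * Mm 2 2 * Mm 3 2 ^ 2) (Mm 3 2 ^ 3)).2.2.2] at hc
    exact hc
  -- conclusion
  refine ⟨Mm 2 2 / Mm 3 3, Mm 3 2 / Mm 3 3, div_ne_zero hane hDne, ?_⟩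
  apply act_eq_of_smul (c := Mm 3 3) hDne
  rw [MabU_val, ← hMm]
  have hlam' : Mm 0 0 = lam := hM0.1
  ext i j
  fin_cases i <;> fin_cases j <;>
    simp [Mab, hlam', hM0.2.1, hM0.2.2.1, hM0.2.2.2, h12, hconst.1, hconst.2] <;>
    field_simp <;>
    first
      | ring1
      | linear_combination h00
      | linear_combination Mm 3 3 * h00
      | linear_combination Mm 3 3 ^ 2 * h00
      | linear_combination h10
      | linear_combination Mm 3 3 * h10
      | linear_combination Mm 3 3 ^ 2 * h10
      | linear_combination h20
      | linear_combination Mm 3 3 * h20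
      | linear_combination Mm 3 3 ^ 2 * h20
      | linear_combination h30
      | linear_combination Mm 3 3 * h30
      | linear_combination Mm 3 3 ^ 2 * h30
      | linear_combination h11
      | linear_combination Mm 3 3 * h11
      | linear_combination h21
      | linear_combination Mm 3 3 * h21
      | linear_combination h31
      | linear_combination Mm 3 3 * h31



lemma MabU_act_inj {a b a' b' : F} (ha : a ≠ 0) (ha' : a' ≠ 0)
    (h : act F (MabU a b ha) = act F (MabU a' b' ha')) : a = a' ∧ b = b' := by
  have h0 : Pp b = Pp b' := by
    have := congrFun h (Pp 0)
    rw [act_MabU_Pp, act_MabU_Pp] at this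
    simpa using this
  have h1 : Pp (a + b) = Pp (a' + b') := by
    have := congrFun h (Pp 1)
    rw [act_MabU_Pp, act_MabU_Pp] at this
    simpa using this
  have hb : b = b' := Pp_inj h0
  have hab : a + b = a' + b' := Pp_inj h1
  refine ⟨?_, hb⟩
  rw [hb] at hab
  exact add_right_cancel hab

lemma stab_inf_card [Fintype F] (hq5 : 5 ≤ Fintype.card F) :
    {f | f ∈ Gq F ∧ f Pinf = Pinf}.ncard
      = Fintype.card F * (Fintype.card F - 1) := by
  classical
  have hrange : {f | f ∈ Gq F ∧ f Pinf = Pinf}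
      = Set.range (fun p : Fˣ × F => act F (MabU (p.1 : F) p.2 p.1.ne_zero)) := by
    ext f
    constructor
    · rintro ⟨hf, hfix⟩
      obtain ⟨a, b, ha, rfl⟩ := stab_inf_classify hq5 f hf hfix
      exact ⟨(Units.mk0 a ha, b), rfl⟩
    · rintro ⟨⟨u, b⟩, rfl⟩
      exact ⟨MabU_mem_Gq _ _ _, act_MabU_Pinf _ _ _⟩
  have hinj : Function.Injective (fun p : Fˣ × F => act F (MabU (p.1 : F) p.2 p.1.ne_zero)) := by
    rintro ⟨u, b⟩ ⟨u', b'⟩ h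
    obtain ⟨h1, h2⟩ := MabU_act_inj _ _ h
    exact Prod.ext (Units.ext h1) h2
  rw [hrange, ← Set.image_univ, Set.ncard_image_of_injective _ hinj, Set.ncard_univ,
    Nat.card_prod, Nat.card_eq_fintype_card, Nat.card_eq_fintype_card, Fintype.card_units]
  ring

end TC

/-- The stabilizer in `G_q` of a point of the twisted cubic has exactly `q(q-1)`
elements. -/
theorem stmt_10 (q : ℕ) (hq : 5 ≤ q) (F : Type) [Field F] [Fintype F]
    (hcard : Fintype.card F = q)
    (P : Submodule F (Fin 4 → F)) (hP : P ∈ twistedCubic F) :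
    {f | f ∈ Gq F ∧ f P = P}.ncard = q * (q - 1) := by
  subst hcard
  rcases hP with ⟨τ, rfl⟩ | rfl
  · show {f | f ∈ Gq F ∧ f (TC.Pp τ) = TC.Pp τ}.ncard = _
    set g := act F (TC.NtU τ) with hg
    set gi := act F ((TC.NtU τ)⁻¹) with hgi
    have hgig : ∀ W, gi (g W) = W := fun W => TC.act_leftInv _ W
    have hggi : ∀ W, g (gi W) = W := fun W => by
      rw [hg, hgi, TC.act_act, inv_mul_cancel, TC.act_one]
    have hgGq : g ∈ Gq F := TC.NtU_mem_Gq τ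
    have hgPinf : g TC.Pinf = TC.Pp τ := TC.act_NtU_Pinf τ
    have hgiGq : gi ∈ Gq F := by
      refine ⟨⟨(TC.NtU τ)⁻¹, rfl⟩, ?_⟩
      have h1 : gi '' (g '' twistedCubic F) = twistedCubic F := by
        rw [← Set.image_comp]
        have h2 : (gi ∘ g) = id := funext fun W => hgig W
        rw [h2, Set.image_id]
      rwa [TC.image_act_NtU τ] at h1
    have hgiPp : gi (TC.Pp τ) = TC.Pinf := by
      rw [← hgPinf]
      exact hgig TC.Pinf
    have himg : (fun h => g ∘ h ∘ gi) '' {f | f ∈ Gq F ∧ f TC.Pinf = TC.Pinf}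
        = {f | f ∈ Gq F ∧ f (TC.Pp τ) = TC.Pp τ} := by
      ext f
      constructor
      · rintro ⟨h, ⟨hhG, hhfix⟩, rfl⟩
        refine ⟨TC.comp_mem_Gq hgGq (TC.comp_mem_Gq hhG hgiGq), ?_⟩
        show g (h (gi (TC.Pp τ))) = TC.Pp τ
        rw [hgiPp, hhfix, hgPinf]
      · rintro ⟨hfG, hffix⟩
        refine ⟨gi ∘ f ∘ g, ⟨TC.comp_mem_Gq hgiGq (TC.comp_mem_Gq hfG hgGq), ?_⟩, ?_⟩
        · show gi (f (g TC.Pinf)) = TC.Pinf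
          rw [hgPinf, hffix, hgiPp]
        · funext W
          show g ((gi ∘ f ∘ g) (gi W)) = f W
          simp only [Function.comp_apply]
          rw [hggi, hggi]
    have hinj : Function.Injective
        (fun h : Submodule F (Fin 4 → F) → Submodule F (Fin 4 → F) => g ∘ h ∘ gi) := by
      intro h h' he
      funext W
      have h1 := congrFun he (g W)
      simp only [Function.comp_apply] at h1
      rw [hgig] at h1
      have h2 := congrArg gi h1
      rwa [hgig, hgig] at h2
    rw [← himg, Set.ncard_image_of_injective _ hinj, TC.stab_inf_card hq]
  · show {f | f ∈ Gq F ∧ f TC.Pinf = TC.Pinf}.ncard = _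
    exact TC.stab_inf_card hq
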